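/- Let g : ℝ → ℝ be continuous and bounded with u·g(u) > 0 for all u ≠ 0, lim inf_{u→∞} g(u) > 0 and lim sup_{u→−∞} g(u) < 0. Let n ≥ 1 be an integer and M > 0. Then there exist μ > 0 and R > 0 such that for all (a, b) with a² + b² ≥ R² and all measurable U with ‖U‖_∞ ≤ M: ∫_0^{2π} g(a cos(nt) + b sin(nt) + U(t)) (a cos(nt) + b sin(nt)) dt ≥ μ·√(a² + b²). -/

import Mathlib

open Real Filter

lemma sin_two_pi_n (n : ℕ) : Real.sin ((n:ℝ) * (2*π)) = 0 := by
  have := Real.sin_int_mul_pi (2*n)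
  push_cast at this
  rw [show ((n:ℝ)*(2*π)) = 2*n*π by ring]; exact this

lemma int_cos_sq' (n : ℕ) (hn : 1 ≤ n) : ∫ t in (0:ℝ)..(2*π), Real.cos (n*t)^2 = π := by
  have hne : (n:ℝ) ≠ 0 := by positivity
  rw [intervalIntegral.integral_comp_mul_left (fun x => Real.cos x ^ 2) hne, integral_cos_sq,
    mul_zero, sin_two_pi_n]
  simp only [smul_eq_mul, Real.sin_zero, Real.cos_zero, mul_zero, zero_mul, sub_zero, zero_sub,
    zero_add, add_zero, neg_zero]
  field_simp

lemma int_sin_sq' (n : ℕ) (hn : 1 ≤ n) : ∫ t in (0:ℝ)..(2*π), Real.sin (n*t)^2 = π := by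
  have hne : (n:ℝ) ≠ 0 := by positivity
  rw [intervalIntegral.integral_comp_mul_left (fun x => Real.sin x ^ 2) hne, integral_sin_sq,
    mul_zero, sin_two_pi_n]
  simp only [smul_eq_mul, Real.sin_zero, Real.cos_zero, mul_zero, zero_mul, sub_zero, zero_sub,
    zero_add, add_zero, neg_zero]
  field_simp

lemma int_cross' (n : ℕ) (hn : 1 ≤ n) :
    ∫ t in (0:ℝ)..(2*π), Real.cos (n*t) * Real.sin (n*t) = 0 := by
  have hne : (n:ℝ) ≠ 0 := by positivity
  rw [intervalIntegral.integral_comp_mul_left (fun x => Real.cos x * Real.sin x) hne]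
  have h0 : ∫ x in (0:ℝ)..((n:ℝ)*(2*π)), Real.cos x * Real.sin x = 0 := by
    have heq : ∀ x : ℝ, Real.cos x * Real.sin x = Real.sin (2*x) / 2 := by
      intro x; rw [Real.sin_two_mul]; ring
    rw [intervalIntegral.integral_congr (fun x _ => heq x), intervalIntegral.integral_div,
      intervalIntegral.integral_comp_mul_left (fun x => Real.sin x) two_ne_zero, integral_sin]
    have h1 : Real.cos (2 * ((n:ℝ)*(2*π))) = 1 := by
      have := Real.cos_nat_mul_two_pi (2*n)
      push_cast at this
      rw [show (2 * ((n:ℝ)*(2*π))) = 2*n*(2*π) by ring]; exact this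
    simp [h1]
  rw [mul_zero, h0, smul_zero]

lemma int_phi_sq (n : ℕ) (hn : 1 ≤ n) (a b : ℝ) :
    ∫ t in (0:ℝ)..(2*π), (a * Real.cos (n*t) + b * Real.sin (n*t))^2 = π * (a^2 + b^2) := by
  have heq : ∀ t : ℝ, (a * Real.cos (n*t) + b * Real.sin (n*t))^2
      = a^2 * Real.cos (n*t)^2 + ((2*a*b) * (Real.cos (n*t) * Real.sin (n*t))
        + b^2 * Real.sin (n*t)^2) := by intro t; ring
  have hc : Continuous fun t : ℝ => Real.cos (n*t) := by continuity
  have hs : Continuous fun t : ℝ => Real.sin (n*t) := by continuity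
  rw [intervalIntegral.integral_congr (fun t _ => heq t)]
  rw [intervalIntegral.integral_add, intervalIntegral.integral_add,
    intervalIntegral.integral_const_mul, intervalIntegral.integral_const_mul,
    intervalIntegral.integral_const_mul, int_cos_sq' n hn, int_sin_sq' n hn, int_cross' n hn]
  · ring
  · exact (continuous_const.mul (hc.mul hs)).intervalIntegrable _ _
  · exact (continuous_const.mul (hs.pow 2)).intervalIntegrable _ _
  · exact (continuous_const.mul (hc.pow 2)).intervalIntegrable _ _
  · exact ((continuous_const.mul (hc.mul hs)).add
      (continuous_const.mul (hs.pow 2))).intervalIntegrable _ _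

set_option maxHeartbeats 1000000 in
theorem stmt_13 (g : ℝ → ℝ) (hgc : Continuous g) (Kb : ℝ) (hKb : ∀ u, |g u| ≤ Kb)
    (hsign : ∀ u : ℝ, u ≠ 0 → 0 < u * g u)
    (hinf : 0 < Filter.liminf g Filter.atTop)
    (hsup : Filter.limsup g Filter.atBot < 0)
    (n : ℕ) (hn : 1 ≤ n) (M : ℝ) (hM : 0 < M) :
    ∃ μ > (0:ℝ), ∃ R > (0:ℝ), ∀ a b : ℝ, R^2 ≤ a^2 + b^2 →
      ∀ U : ℝ → ℝ, Measurable U → (∀ t, |U t| ≤ M) →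
        μ * Real.sqrt (a^2 + b^2) ≤
          ∫ t in (0:ℝ)..(2*π),
            g (a * Real.cos (n*t) + b * Real.sin (n*t) + U t)
              * (a * Real.cos (n*t) + b * Real.sin (n*t)) := by
  have hKb0 : 0 ≤ Kb := le_trans (abs_nonneg _) (hKb 0)
  -- extract uniform sign bounds at infinity
  have hbdd1 : Filter.IsBoundedUnder (· ≥ ·) Filter.atTop g :=
    Filter.isBoundedUnder_of ⟨-Kb, fun u => (abs_le.1 (hKb u)).1⟩
  have hbdd2 : Filter.IsBoundedUnder (· ≤ ·) Filter.atBot g :=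
    Filter.isBoundedUnder_of ⟨Kb, fun u => (abs_le.1 (hKb u)).2⟩
  set L := Filter.liminf g Filter.atTop with hL
  set L' := Filter.limsup g Filter.atBot with hL'
  have h1 : ∀ᶠ u in Filter.atTop, L/2 < g u :=
    Filter.eventually_lt_of_lt_liminf (by linarith) hbdd1
  have h2 : ∀ᶠ u in Filter.atBot, g u < L'/2 :=
    Filter.eventually_lt_of_limsup_lt (by linarith) hbdd2
  obtain ⟨T₁, hT₁⟩ := Filter.eventually_atTop.1 h1
  obtain ⟨T₂, hT₂⟩ := Filter.eventually_atBot.1 h2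
  set c := min (L/2) (-L'/2) with hcdef
  have hc : 0 < c := lt_min (by linarith) (by linarith)
  set T := max 1 (max T₁ (-T₂)) with hTdef
  have hT1le : (1:ℝ) ≤ T := le_max_left _ _
  have hup : ∀ u, T ≤ u → c ≤ g u := by
    intro u hu
    have : T₁ ≤ u := le_trans (le_trans (le_max_left _ _) (le_max_right _ _)) hu
    exact le_of_lt (lt_of_le_of_lt (min_le_left _ _) (hT₁ u this))
  have hdown : ∀ u, u ≤ -T → g u ≤ -c := by
    intro u hu
    have h3 : -T₂ ≤ T := le_trans (le_max_right _ _) (le_max_right _ _)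
    have : u ≤ T₂ := by linarith
    have h4 := hT₂ u this
    have h5 : c ≤ -L'/2 := min_le_right _ _
    linarith
  set s := M + T with hsdef
  have hs : 0 < s := by linarith
  set C := (c+Kb)*s*(2*π) with hCdef
  have hC0 : 0 ≤ C := by positivity
  have hπ : (0:ℝ) < π := Real.pi_pos
  refine ⟨c*π/2, by positivity, max 1 (2*C/(c*π)), lt_of_lt_of_le one_pos (le_max_left _ _),
    fun a b hab U hU hUb => ?_⟩
  set R := max 1 (2*C/(c*π)) with hRdef
  set A := Real.sqrt (a^2+b^2) with hAdef
  have hR0 : (0:ℝ) < R := lt_of_lt_of_le one_pos (le_max_left _ _)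
  have hRA : R ≤ A := by
    have := Real.sqrt_le_sqrt hab
    rwa [Real.sqrt_sq hR0.le] at this
  have hA0 : 0 < A := lt_of_lt_of_le hR0 hRA
  have hA2 : A^2 = a^2 + b^2 := Real.sq_sqrt (by positivity)
  set φ : ℝ → ℝ := fun t => a * Real.cos (n*t) + b * Real.sin (n*t) with hφdef
  have hφcont : Continuous φ :=
    (continuous_const.mul (Real.continuous_cos.comp (continuous_const.mul continuous_id))).add
      (continuous_const.mul (Real.continuous_sin.comp (continuous_const.mul continuous_id)))
  have hφle : ∀ t, |φ t| ≤ A := by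
    intro t
    have h1 : (φ t)^2 ≤ a^2 + b^2 := by
      have := Real.sin_sq_add_cos_sq ((n:ℝ)*t)
      simp only [hφdef]
      nlinarith [sq_nonneg (a * Real.sin (n*t) - b * Real.cos (n*t))]
    rw [← Real.sqrt_sq_eq_abs]
    exact Real.sqrt_le_sqrt h1
  -- pointwise lower bound
  have hpt : ∀ t, c * |φ t| - (c+Kb)*s ≤ g (φ t + U t) * φ t := by
    intro t
    set x := φ t with hx
    set v := U t with hv
    have hvb := abs_le.1 (hUb t)
    rcases le_or_gt s x with hxs | hxs
    · have hy : T ≤ x + v := by simp only [hsdef] at hxs; linarith [hvb.1]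
      have hg := hup _ hy
      have hx0 : 0 ≤ x := le_trans hs.le hxs
      rw [abs_of_nonneg hx0]
      nlinarith [mul_le_mul_of_nonneg_right hg hx0]
    · rcases le_or_gt x (-s) with hxs' | hxs'
      · have hy : x + v ≤ -T := by simp only [hsdef] at hxs'; linarith [hvb.2]
        have hg := hdown _ hy
        have hx0 : x ≤ 0 := le_trans hxs' (by linarith)
        rw [abs_of_nonpos hx0]
        nlinarith [mul_le_mul_of_nonpos_right hg hx0]
      · have hax : |x| ≤ s := abs_le.2 ⟨hxs'.le, hxs.le⟩
        have h1 : |g (x+v) * x| ≤ Kb * s := by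
          rw [abs_mul]
          exact mul_le_mul (hKb _) hax (abs_nonneg _) hKb0
        have h2 := (abs_le.1 h1).1
        have h3 : c * |x| ≤ c * s := mul_le_mul_of_nonneg_left hax hc.le
        linarith
  -- integrability
  have hf_meas : Measurable (fun t => g (φ t + U t) * φ t) :=
    ((hgc.measurable).comp ((hφcont.measurable).add hU)).mul hφcont.measurable
  have hf_int : IntervalIntegrable (fun t => g (φ t + U t) * φ t) MeasureTheory.volume 0 (2*π) := by
    apply IntervalIntegrable.mono_fun (intervalIntegrable_const (c := Kb * A))
    · exact hf_meas.aestronglyMeasurable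
    · apply MeasureTheory.ae_of_all
      intro t
      simp only [Real.norm_eq_abs, abs_mul]
      rw [abs_of_nonneg hKb0, abs_of_nonneg hA0.le]
      exact mul_le_mul (hKb _) (hφle t) (abs_nonneg _) hKb0
  have hlhs_int : IntervalIntegrable (fun t => c * |φ t| - (c+Kb)*s) MeasureTheory.volume 0 (2*π) :=
    ((continuous_const.mul hφcont.abs).sub continuous_const).intervalIntegrable _ _
  have habs_cont : Continuous fun t => |φ t| := hφcont.abs
  have hmono := intervalIntegral.integral_mono_on (by positivity : (0:ℝ) ≤ 2*π)
    hlhs_int hf_int (fun t _ => hpt t)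
  have hsub : (∫ t in (0:ℝ)..(2*π), (c * |φ t| - (c+Kb)*s))
      = c * (∫ t in (0:ℝ)..(2*π), |φ t|) - (c+Kb)*s*(2*π) := by
    rw [intervalIntegral.integral_sub (f := fun t => c * |φ t|)
      ((continuous_const.mul habs_cont).intervalIntegrable _ _)
      (intervalIntegrable_const), intervalIntegral.integral_const_mul,
      intervalIntegral.integral_const, smul_eq_mul]
    ring
  -- lower bound on ∫ |φ|
  have habs_ge : π * A ≤ ∫ t in (0:ℝ)..(2*π), |φ t| := by
    have h2 : (∫ t in (0:ℝ)..(2*π), (φ t)^2) = π * (a^2+b^2) := int_phi_sq n hn a b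
    have hle : ∀ t ∈ Set.Icc (0:ℝ) (2*π), (φ t)^2 ≤ A * |φ t| := by
      intro t _
      have h3 := hφle t
      nlinarith [abs_nonneg (φ t), sq_abs (φ t)]
    have h4 := intervalIntegral.integral_mono_on (μ := MeasureTheory.volume) (by positivity : (0:ℝ) ≤ 2*π)
      (f := fun t => (φ t)^2) (g := fun t => A * |φ t|)
      ((hφcont.pow 2).intervalIntegrable _ _)
      ((continuous_const.mul habs_cont).intervalIntegrable _ _) hle
    rw [h2, intervalIntegral.integral_const_mul] at h4
    have h5 : π * (a^2+b^2) = A * (π * A) := by rw [← hA2]; ring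
    rw [h5] at h4
    exact le_of_mul_le_mul_left h4 hA0
  -- conclude
  have hRC : 2*C/(c*π) ≤ A := le_trans (le_max_right _ _) hRA
  have hcπ : (0:ℝ) < c*π := by positivity
  rw [div_le_iff₀ hcπ] at hRC
  have hchain : c * (π * A) - C ≤ ∫ t in (0:ℝ)..(2*π), g (φ t + U t) * φ t := by
    rw [hsub] at hmono
    have := mul_le_mul_of_nonneg_left habs_ge hc.le
    calc c * (π * A) - C ≤ c * (∫ t in (0:ℝ)..(2*π), |φ t|) - (c+Kb)*s*(2*π) := by
          rw [hCdef]; linarith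
      _ ≤ _ := hmono
  have : c*π/2 * A ≤ c * (π * A) - C := by nlinarith
  exact le_trans this hchain
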